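/- Let Q be a quadratic module in a commutative unital ℝ-algebra A such that 1 is an algebraic interior point of Q, and let a₀ ∈ A \ Q. Then there exists a linear functional φ : A → ℝ with φ(Q) ⊆ [0,∞), φ(1) = 1, and φ(a₀) ≤ 0. -/

import Mathlib

/-- A quadratic module in a commutative unital ℝ-algebra. -/
structure IsQuadraticModule {A : Type*} [CommRing A] [Algebra ℝ A] (Q : Set A) : Prop where
  add_mem : ∀ p ∈ Q, ∀ q ∈ Q, p + q ∈ Q
  one_mem : (1 : A) ∈ Q
  sq_mul_mem : ∀ (a : A), ∀ q ∈ Q, a ^ 2 * q ∈ Q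

theorem IsQuadraticModule.smul_mem {A : Type*} [CommRing A] [Algebra ℝ A] {Q : Set A}
    (hQ : IsQuadraticModule Q) {t : ℝ} (ht : 0 ≤ t) {q : A} (hq : q ∈ Q) : t • q ∈ Q := by
  have h := hQ.sq_mul_mem (Real.sqrt t • (1 : A)) q hq
  have : (Real.sqrt t • (1 : A)) ^ 2 * q = t • q := by
    rw [smul_pow, one_pow, Real.sq_sqrt ht, smul_mul_assoc, one_mul]
  rwa [this] at h

theorem IsQuadraticModule.zero_mem {A : Type*} [CommRing A] [Algebra ℝ A] {Q : Set A}
    (hQ : IsQuadraticModule Q) : (0 : A) ∈ Q := by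
  have h := hQ.sq_mul_mem 0 1 hQ.one_mem
  simpa using h

/-- Separation of a point from a quadratic module whose unit is an
algebraic interior point. -/
theorem separation_from_quadraticModule {A : Type*} [CommRing A] [Algebra ℝ A]
    {Q : Set A} (hQ : IsQuadraticModule Q)
    (hInt : ∀ a : A, ∃ δ : ℝ, 0 < δ ∧ ∀ t : ℝ, |t| ≤ δ → (1 : A) + t • a ∈ Q)
    {a₀ : A} (ha₀ : a₀ ∉ Q) :
    ∃ φ : A →ₗ[ℝ] ℝ, (∀ q ∈ Q, 0 ≤ φ q) ∧ φ 1 = 1 ∧ φ a₀ ≤ 0 := by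
  -- 1 ≠ 0 in A
  have h1 : (1 : A) ≠ 0 := by
    intro h
    have : Subsingleton A := subsingleton_of_zero_eq_one h.symm
    exact ha₀ (by rw [Subsingleton.elim a₀ (1 : A)]; exact hQ.one_mem)
  -- if some negative multiple of 1 lies in Q, then Q = A, contradiction
  have hneg : ∀ t : ℝ, t < 0 → t • (1 : A) ∉ Q := by
    intro t ht hmem
    apply ha₀
    obtain ⟨δ, hδ, hδQ⟩ := hInt a₀
    have h1a : (1 : A) + δ • a₀ ∈ Q := hδQ δ (by rw [abs_of_pos hδ])
    have hA : a₀ = δ⁻¹ • ((1 : A) + δ • a₀) + (δ⁻¹ * (-t)⁻¹) • (t • (1 : A)) := by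
      have hδ' : δ ≠ 0 := ne_of_gt hδ
      have ht' : t ≠ 0 := ne_of_lt ht
      match_scalars <;> (field_simp; try ring)
    rw [hA]
    exact hQ.add_mem _ (hQ.smul_mem (le_of_lt (inv_pos.mpr hδ)) h1a) _
      (hQ.smul_mem (mul_nonneg (le_of_lt (inv_pos.mpr hδ))
        (le_of_lt (inv_pos.mpr (neg_pos.mpr ht)))) hmem)
  -- the cone C = Q + ℝ≥0 • (-a₀)
  let C : ConvexCone ℝ A :=
    { carrier := {x | ∃ q ∈ Q, ∃ s : ℝ, 0 ≤ s ∧ x = q - s • a₀}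
      smul_mem' := by
        rintro c hc x ⟨q, hq, s, hs, rfl⟩
        exact ⟨c • q, hQ.smul_mem (le_of_lt hc) hq, c * s,
          mul_nonneg (le_of_lt hc) hs, by rw [smul_sub, smul_smul]⟩
      add_mem' := by
        rintro x ⟨q, hq, s, hs, rfl⟩ y ⟨q', hq', s', hs', rfl⟩
        exact ⟨q + q', hQ.add_mem _ hq _ hq', s + s', add_nonneg hs hs', by
          rw [add_smul]; abel⟩ }
  have hQC : ∀ q ∈ Q, q ∈ C := fun q hq => ⟨q, hq, 0, le_refl _, by simp⟩
  -- the partial linear map on span {1}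
  let f : A →ₗ.[ℝ] ℝ := LinearPMap.mkSpanSingleton (1 : A) (1 : ℝ) h1
  have hdom : f.domain = Submodule.span ℝ {(1 : A)} := rfl
  have nonneg : ∀ x : f.domain, (x : A) ∈ C → 0 ≤ f x := by
    rintro ⟨x, hx⟩ hxC
    rw [hdom, Submodule.mem_span_singleton] at hx
    obtain ⟨t, rfl⟩ := hx
    have hft : f ⟨t • (1 : A), hx⟩ = t • (1 : ℝ) :=
      LinearPMap.mkSpanSingleton'_apply (1 : A) (1 : ℝ) _ t hx
    rw [hft, smul_eq_mul, mul_one]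
    by_contra hlt
    push_neg at hlt
    obtain ⟨q, hq, s, hs, heq⟩ := hxC
    -- s • a₀ = q + (-t) • 1 ∈ Q
    have heq' : (t • (1 : A)) = q - s • a₀ := heq
    have hsa : s • a₀ = q + (-t) • (1 : A) := by
      linear_combination (norm := module) heq'
    have hsaQ : s • a₀ ∈ Q := by
      rw [hsa]
      exact hQ.add_mem _ hq _ (hQ.smul_mem (le_of_lt (neg_pos.mpr hlt)) hQ.one_mem)
    rcases eq_or_lt_of_le hs with hs0 | hs0
    · -- s = 0 : then q = t • 1 ∈ Q with t < 0, contradiction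
      apply hneg t hlt
      have hq1 : q = t • (1 : A) := by
        rw [← hs0, zero_smul] at hsa
        linear_combination (norm := module) -hsa
      rwa [← hq1]
    · -- s > 0 : then a₀ ∈ Q
      apply ha₀
      have : a₀ = s⁻¹ • (s • a₀) := by
        rw [smul_smul, inv_mul_cancel₀ (ne_of_gt hs0), one_smul]
      rw [this]
      exact hQ.smul_mem (le_of_lt (inv_pos.mpr hs0)) hsaQ
  have dense : ∀ y, ∃ x : f.domain, (x : A) + y ∈ C := by
    intro y
    obtain ⟨δ, hδ, hδQ⟩ := hInt y
    refine ⟨⟨δ⁻¹ • (1 : A), Submodule.smul_mem _ _ (Submodule.mem_span_singleton_self _)⟩, ?_⟩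
    apply hQC
    have : δ⁻¹ • (1 : A) + y = δ⁻¹ • ((1 : A) + δ • y) := by
      rw [smul_add, smul_smul, inv_mul_cancel₀ (ne_of_gt hδ), one_smul]
    rw [this]
    exact hQ.smul_mem (le_of_lt (inv_pos.mpr hδ)) (hδQ δ (by rw [abs_of_pos hδ]))
  obtain ⟨g, hgf, hgC⟩ := riesz_extension (C.toPointedCone (hQC 0 hQ.zero_mem)) f nonneg dense
  refine ⟨g, fun q hq => hgC q (hQC q hq), ?_, ?_⟩
  · have := hgf ⟨(1 : A), Submodule.mem_span_singleton_self _⟩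
    rwa [LinearPMap.mkSpanSingleton_apply] at this
  · have hma : -a₀ ∈ C := ⟨0, hQ.zero_mem, 1, zero_le_one, by simp⟩
    have := hgC _ hma
    rw [map_neg] at this
    linarith
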